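/- (Optimality of Bourgain's bound, due to Linial, London and Rabinovich and invoked by the paper.) There exists a constant c > 0 such that for every natural number N there exist n ≥ N and a finite metric space (X, d) with n points such that every embedding of X into any Euclidean space ℝ^q (any q) has distortion at least c · log n; i.e., for every q, every map f : X → ℝ^q, and every r > 0 and α ≥ 1 satisfying r·d(x, y) ≤ dist(f(x), f(y)) ≤ α·r·d(x, y) for all x, y ∈ X, one has α ≥ c · log n. -/

import Mathlib

noncomputable section
open Finset

namespace LLR

attribute [local instance] Classical.propDecidable

abbrev Cube (k : ℕ) := Fin k → ZMod 2

variable {k : ℕ}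

lemma zmod2_cases (v : ZMod 2) : v = 0 ∨ v = 1 := by
  fin_cases v
  · exact Or.inl rfl
  · exact Or.inr rfl

lemma zmod2_ne_zero {v : ZMod 2} (h : v ≠ 0) : v = 1 :=
  (zmod2_cases v).resolve_left h

lemma cube_add_self (w : Cube k) : w + w = 0 := by
  funext i
  show w i + w i = 0
  rcases zmod2_cases (w i) with h | h <;> rw [h] <;> decide

lemma cube_add_eq_zero {x y : Cube k} (h : x + y = 0) : y = x := by
  have := congrArg (x + ·) h
  simpa [← add_assoc, cube_add_self x] using this

/-- Hamming weight. -/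
def wt (w : Cube k) : ℕ := (univ.filter fun i => w i ≠ 0).card

lemma wt_zero : wt (0 : Cube k) = 0 := by simp [wt]

lemma wt_eq_zero {w : Cube k} (h : wt w = 0) : w = 0 := by
  funext i
  by_contra hi
  have hmem : i ∈ univ.filter fun i => w i ≠ 0 := by
    simp only [mem_filter, mem_univ, true_and]; exact hi
  have := card_eq_zero.mp h
  rw [this] at hmem
  exact absurd hmem (notMem_empty i)

lemma wt_add_le (u v : Cube k) : wt (u + v) ≤ wt u + wt v := by
  classical
  refine le_trans (card_le_card ?_) (card_union_le _ _)
  intro i hi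
  simp only [mem_filter, mem_univ, true_and, mem_union] at hi ⊢
  by_contra hc
  push_neg at hc
  obtain ⟨h1, h2⟩ := hc
  apply hi
  show u i + v i = 0
  rw [h1, h2, add_zero]

lemma wt_single (i : Fin k) : wt (Pi.single i (1 : ZMod 2)) ≤ 1 := by
  classical
  have : (univ.filter fun j => (Pi.single i (1 : ZMod 2) : Cube k) j ≠ 0) ⊆ {i} := by
    intro j hj
    simp only [mem_filter, mem_univ, true_and] at hj
    simp only [mem_singleton]
    by_contra hji
    exact hj (by simp [Pi.single_apply, hji])
  calc wt (Pi.single i (1 : ZMod 2) : Cube k) ≤ ({i} : Finset (Fin k)).card := card_le_card this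
  _ = 1 := card_singleton i

lemma card_cube : Fintype.card (Cube k) = 2 ^ k := by
  simp [Fintype.card_fun]

/-! ### Fourier analysis on the cube -/

/-- sign character of `ZMod 2`. -/
def sgn (v : ZMod 2) : ℝ := if v = 0 then 1 else -1

lemma sgn_zero : sgn 0 = 1 := by simp [sgn]

lemma sgn_one : sgn 1 = -1 := by norm_num [sgn]

lemma sgn_add (u v : ZMod 2) : sgn (u + v) = sgn u * sgn v := by
  rcases zmod2_cases u with h | h <;> rcases zmod2_cases v with h' | h' <;>
    subst h <;> subst h' <;>
    simp [sgn, show ((1 : ZMod 2) + 1) = 0 from by decide]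

lemma sgn_sq (v : ZMod 2) : sgn v * sgn v = 1 := by
  rcases zmod2_cases v with h | h <;> subst h <;> norm_num [sgn]

/-- dot product on the cube -/
def dot (a x : Cube k) : ZMod 2 := ∑ i, a i * x i

lemma dot_comm (a x : Cube k) : dot a x = dot x a := by
  unfold dot; exact Finset.sum_congr rfl fun i _ => mul_comm _ _

lemma dot_add_right (a x y : Cube k) : dot a (x + y) = dot a x + dot a y := by
  unfold dot
  rw [← Finset.sum_add_distrib]
  exact Finset.sum_congr rfl fun i _ => by show a i * (x i + y i) = _; ring

lemma dot_add_left (a b x : Cube k) : dot (a + b) x = dot a x + dot b x := by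
  rw [dot_comm, dot_add_right, dot_comm x a, dot_comm x b]

lemma dot_zero_left (x : Cube k) : dot 0 x = 0 := by
  unfold dot
  refine Finset.sum_eq_zero fun i _ => by show (0 : ZMod 2) * x i = 0; ring

lemma dot_single_right (a : Cube k) (i : Fin k) :
    dot a (Pi.single i (1 : ZMod 2)) = a i := by
  unfold dot
  rw [Finset.sum_eq_single i]
  · simp
  · intro j _ hj
    simp [Pi.single_apply, hj]
  · intro h; exact absurd (mem_univ i) h

lemma dot_single_left (i : Fin k) (x : Cube k) :
    dot (Pi.single i (1 : ZMod 2)) x = x i := by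
  rw [dot_comm, dot_single_right]

lemma sum_flip_zero {f : Cube k → ℝ} (c : Cube k) (hc : ∀ x, f (x + c) = - f x) :
    ∑ x, f x = 0 := by
  have h1 : ∑ x, f (x + c) = ∑ x, f x := by
    apply Fintype.sum_equiv (Equiv.addRight c)
    intro x
    rfl
  have h2 : ∑ x, f (x + c) = - ∑ x, f x := by
    rw [← Finset.sum_neg_distrib]
    exact Finset.sum_congr rfl fun x _ => hc x
  have := h1.symm.trans h2
  linarith

lemma sum_sgn_dot (z : Cube k) :
    ∑ a, sgn (dot a z) = if z = 0 then (2 ^ k : ℝ) else 0 := by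
  by_cases hz : z = 0
  · subst hz
    simp only [if_pos rfl]
    have : ∀ a : Cube k, sgn (dot a 0) = 1 := by
      intro a
      rw [dot_comm, dot_zero_left, sgn_zero]
    rw [Finset.sum_congr rfl fun a _ => this a]
    simp [card_cube]
  · rw [if_neg hz]
    obtain ⟨i, hi⟩ := Function.ne_iff.mp hz
    have hzi : z i = 1 := zmod2_ne_zero hi
    apply sum_flip_zero (Pi.single i (1 : ZMod 2))
    intro a
    rw [dot_add_left, sgn_add, dot_single_left, hzi, sgn_one]
    ring

/-- (unnormalized) Fourier transform -/
def hat (h : Cube k → ℝ) (a : Cube k) : ℝ := ∑ x, h x * sgn (dot a x)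

lemma hat_zero_eq (h : Cube k → ℝ) : hat h 0 = ∑ x, h x := by
  unfold hat
  exact Finset.sum_congr rfl fun x _ => by rw [dot_zero_left, sgn_zero, mul_one]

lemma parseval (h : Cube k → ℝ) :
    ∑ a, (hat h a) ^ 2 = 2 ^ k * ∑ x, (h x) ^ 2 := by
  have expand : ∀ a : Cube k, (hat h a) ^ 2
      = ∑ x, ∑ y, (h x * h y) * sgn (dot a (x + y)) := by
    intro a
    rw [sq]
    unfold hat
    rw [Finset.sum_mul_sum]
    refine Finset.sum_congr rfl fun x _ => Finset.sum_congr rfl fun y _ => ?_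
    rw [dot_add_right, sgn_add]
    ring
  calc ∑ a, (hat h a) ^ 2
      = ∑ a, ∑ x, ∑ y, (h x * h y) * sgn (dot a (x + y)) :=
        Finset.sum_congr rfl fun a _ => expand a
    _ = ∑ x, ∑ y, ∑ a, (h x * h y) * sgn (dot a (x + y)) := by
        rw [Finset.sum_comm]
        exact Finset.sum_congr rfl fun x _ => Finset.sum_comm
    _ = ∑ x, ∑ y, (h x * h y) * (if x + y = 0 then (2 ^ k : ℝ) else 0) := by
        refine Finset.sum_congr rfl fun x _ => Finset.sum_congr rfl fun y _ => ?_
        rw [← Finset.mul_sum, sum_sgn_dot]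
    _ = ∑ x, (h x * h x) * (2 ^ k : ℝ) := by
        refine Finset.sum_congr rfl fun x _ => ?_
        rw [Finset.sum_eq_single x]
        · simp [cube_add_self]
        · intro y _ hyx
          rw [if_neg, mul_zero]
          intro hcon
          exact hyx (cube_add_eq_zero hcon)
        · intro hx; exact absurd (mem_univ x) hx
    _ = 2 ^ k * ∑ x, (h x) ^ 2 := by
        rw [Finset.mul_sum]
        exact Finset.sum_congr rfl fun x _ => by ring

lemma hat_shift (h : Cube k → ℝ) (c a : Cube k) :
    hat (fun x => h (x + c)) a = sgn (dot a c) * hat h a := by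
  unfold hat
  have h1 : ∑ x, h (x + c) * sgn (dot a x) = ∑ y, h y * sgn (dot a (y + c)) := by
    apply Fintype.sum_equiv (Equiv.addRight c)
    intro x
    show h (x + c) * sgn (dot a x) = h (x + c) * sgn (dot a (x + c + c))
    rw [add_assoc, cube_add_self, add_zero]
  rw [h1, Finset.mul_sum]
  refine Finset.sum_congr rfl fun y _ => ?_
  rw [dot_add_right, sgn_add]
  ring

lemma hat_eq_zero_of_invariant (h : Cube k → ℝ) (c : Cube k)
    (hinv : ∀ x, h (x + c) = h x) {a : Cube k} (hac : dot a c ≠ 0) :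
    hat h a = 0 := by
  have h1 : hat (fun x => h (x + c)) a = hat h a := by
    unfold hat
    refine Finset.sum_congr rfl fun x _ => ?_
    show h (x + c) * sgn (dot a x) = h x * sgn (dot a x)
    rw [hinv]
  rw [hat_shift, zmod2_ne_zero hac, sgn_one] at h1
  linarith

lemma hat_sub (h1 h2 : Cube k → ℝ) (a : Cube k) :
    hat (fun x => h1 x - h2 x) a = hat h1 a - hat h2 a := by
  unfold hat
  rw [← Finset.sum_sub_distrib]
  exact Finset.sum_congr rfl fun x _ => by ring

/-- Fourier expression of the edge energy. -/
lemma energy (h : Cube k → ℝ) :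
    (2 ^ k : ℝ) * ∑ i, ∑ x, (h (x + Pi.single i 1) - h x) ^ 2
      = 4 * ∑ a, (wt a : ℝ) * (hat h a) ^ 2 := by
  have step : ∀ i : Fin k,
      (2 ^ k : ℝ) * ∑ x, (h (x + Pi.single i 1) - h x) ^ 2
        = ∑ a, (if a i = 0 then (0:ℝ) else 4) * (hat h a) ^ 2 := by
    intro i
    have hp := parseval (fun x => h (x + Pi.single i 1) - h x)
    rw [← hp]
    refine Finset.sum_congr rfl fun a _ => ?_
    rw [hat_sub, hat_shift, dot_single_right]
    rcases zmod2_cases (a i) with h0 | h0 <;> rw [h0]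
    · rw [sgn_zero]; ring_nf; simp
    · rw [sgn_one, if_neg one_ne_zero]; ring
  calc (2 ^ k : ℝ) * ∑ i, ∑ x, (h (x + Pi.single i 1) - h x) ^ 2
      = ∑ i, ∑ a, (if a i = 0 then (0:ℝ) else 4) * (hat h a) ^ 2 := by
        rw [Finset.mul_sum]
        exact Finset.sum_congr rfl fun i _ => step i
    _ = ∑ a, (∑ i, (if a i = 0 then (0:ℝ) else 4)) * (hat h a) ^ 2 := by
        rw [Finset.sum_comm]
        exact Finset.sum_congr rfl fun a _ => by rw [Finset.sum_mul]
    _ = 4 * ∑ a, (wt a : ℝ) * (hat h a) ^ 2 := by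
        rw [Finset.mul_sum]
        refine Finset.sum_congr rfl fun a _ => ?_
        have : (∑ i, (if a i = 0 then (0:ℝ) else 4)) = 4 * (wt a : ℝ) := by
          rw [Finset.sum_ite, Finset.sum_const, Finset.sum_const]
          unfold wt
          have hfe : univ.filter (fun i => ¬ a i = 0) = univ.filter (fun i => a i ≠ 0) := rfl
          rw [hfe]
          simp [mul_comm]
        rw [this]
        ring

/-- Fourier expression of the sum over pairs. -/
lemma pairs_sum (h : Cube k → ℝ) :
    ∑ x, ∑ y, (h x - h y) ^ 2
      = 2 * ∑ a, (hat h a) ^ 2 - 2 * (hat h 0) ^ 2 := by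
  have expand : ∑ x, ∑ y, (h x - h y) ^ 2
      = (2 ^ k : ℝ) * ∑ x, (h x) ^ 2 + (2 ^ k : ℝ) * ∑ y, (h y) ^ 2
        - 2 * ((∑ x, h x) * (∑ y, h y)) := by
    have hx : ∀ x : Cube k, ∑ y, (h x - h y) ^ 2
        = (2 ^ k : ℝ) * (h x) ^ 2 + ∑ y, (h y) ^ 2 - 2 * (h x * ∑ y, h y) := by
      intro x
      have e1 : ∀ y : Cube k, (h x - h y) ^ 2 = (h x) ^ 2 + (h y) ^ 2 - 2 * (h x * h y) := by
        intro y; ring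
      have e2 : ∑ y, 2 * (h x * h y) = 2 * (h x * ∑ y, h y) := by
        rw [Finset.mul_sum, Finset.mul_sum]
      have e3 : ∑ _y : Cube k, (h x) ^ 2 = (2 ^ k : ℝ) * (h x) ^ 2 := by
        rw [Finset.sum_const, nsmul_eq_mul, Finset.card_univ, card_cube]
        push_cast
        ring
      rw [Finset.sum_congr rfl fun y _ => e1 y]
      rw [Finset.sum_sub_distrib, Finset.sum_add_distrib, e2, e3]
    rw [Finset.sum_congr rfl fun x _ => hx x]
    rw [Finset.sum_sub_distrib, Finset.sum_add_distrib, ← Finset.mul_sum,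
      Finset.sum_const, ← Finset.mul_sum, Finset.sum_mul, nsmul_eq_mul,
      Finset.card_univ, card_cube]
    push_cast
    ring_nf
    rw [Finset.sum_congr rfl fun x _ => mul_comm (h x) (∑ y, h y)]
  rw [expand, hat_zero_eq, ← parseval]
  ring

/-- The Poincaré inequality for `C`-invariant functions, given a lower bound on the
weight of nonzero vectors orthogonal to `C`. -/
lemma poincare (C : AddSubgroup (Cube k)) (m : ℕ)
    (hmin : ∀ a : Cube k, a ≠ 0 → (∀ c ∈ C, dot a c = 0) → m ≤ wt a)
    (h : Cube k → ℝ) (hinv : ∀ x, ∀ c ∈ C, h (x + c) = h x) :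
    2 * (m : ℝ) * (∑ x, ∑ y, (h x - h y) ^ 2)
      ≤ (2 ^ k : ℝ) * ∑ i, ∑ x, (h (x + Pi.single i 1) - h x) ^ 2 := by
  have key : ∀ a : Cube k, a ≠ 0 → (m : ℝ) * (hat h a) ^ 2 ≤ (wt a : ℝ) * (hat h a) ^ 2 := by
    intro a ha
    by_cases hz : ∀ c ∈ C, dot a c = 0
    · have := hmin a ha hz
      have hcast : (m : ℝ) ≤ (wt a : ℝ) := by exact_mod_cast this
      nlinarith [sq_nonneg (hat h a)]
    · push_neg at hz
      obtain ⟨c, hc, hne⟩ := hz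
      rw [hat_eq_zero_of_invariant h c (fun x => hinv x c hc) hne]
      simp
  have hsplit : ∑ a, (hat h a) ^ 2 = (hat h 0) ^ 2 + ∑ a ∈ univ.erase 0, (hat h a) ^ 2 := by
    rw [← Finset.sum_erase_add univ _ (mem_univ 0)]
    ring
  have hP : ∑ x, ∑ y, (h x - h y) ^ 2 = 2 * ∑ a ∈ univ.erase 0, (hat h a) ^ 2 := by
    rw [pairs_sum, hsplit]; ring
  have h1 : (m : ℝ) * ∑ a ∈ univ.erase 0, (hat h a) ^ 2
      ≤ ∑ a ∈ univ.erase 0, (wt a : ℝ) * (hat h a) ^ 2 := by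
    rw [Finset.mul_sum]
    refine Finset.sum_le_sum fun a haer => ?_
    exact key a (Finset.ne_of_mem_erase haer)
  have h2 : ∑ a ∈ univ.erase 0, (wt a : ℝ) * (hat h a) ^ 2
      ≤ ∑ a, (wt a : ℝ) * (hat h a) ^ 2 := by
    refine Finset.sum_le_sum_of_subset_of_nonneg (Finset.erase_subset _ _) ?_
    intro a _ _
    positivity
  have hE := energy h
  calc 2 * (m : ℝ) * (∑ x, ∑ y, (h x - h y) ^ 2)
      = 4 * ((m : ℝ) * ∑ a ∈ univ.erase 0, (hat h a) ^ 2) := by rw [hP]; ring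
    _ ≤ 4 * ∑ a, (wt a : ℝ) * (hat h a) ^ 2 := by linarith
    _ = (2 ^ k : ℝ) * ∑ i, ∑ x, (h (x + Pi.single i 1) - h x) ^ 2 := hE.symm

/-! ### Counting -/

lemma card_ball_le (m : ℕ) :
    (univ.filter fun w : Cube k => wt w < m).card ≤ ∑ j ∈ range m, k.choose j := by
  classical
  -- inject into small subsets of `Fin k`
  have hinj : ∀ w ∈ univ.filter fun w : Cube k => wt w < m,
      (univ.filter fun i => w i ≠ 0) ∈ univ.filter fun s : Finset (Fin k) => s.card < m := by
    intro w hw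
    simp only [mem_filter, mem_univ, true_and] at hw ⊢
    exact hw
  have hinj2 : ∀ w₁ ∈ univ.filter fun w : Cube k => wt w < m,
      ∀ w₂ ∈ univ.filter fun w : Cube k => wt w < m,
      (univ.filter fun i => w₁ i ≠ 0) = (univ.filter fun i => w₂ i ≠ 0) → w₁ = w₂ := by
    intro w₁ _ w₂ _ hEq
    funext i
    have := Finset.ext_iff.mp hEq i
    simp only [mem_filter, mem_univ, true_and] at this
    rcases zmod2_cases (w₁ i) with h1 | h1 <;> rcases zmod2_cases (w₂ i) with h2 | h2 <;>
      rw [h1, h2] at this ⊢ <;> simp_all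
  have h1 := Finset.card_le_card_of_injOn _ hinj hinj2
  refine le_trans h1 ?_
  -- count subsets of size `< m`
  have hsplit : (univ.filter fun s : Finset (Fin k) => s.card < m)
      = (range m).biUnion fun j => Finset.powersetCard j univ := by
    ext s
    simp only [mem_filter, mem_univ, true_and, mem_biUnion, mem_range,
      Finset.mem_powersetCard_univ]
    constructor
    · intro hs; exact ⟨s.card, hs, rfl⟩
    · rintro ⟨j, hj, rfl⟩; exact hj
  rw [hsplit]
  refine le_trans (Finset.card_biUnion_le) ?_
  refine Finset.sum_le_sum fun j _ => ?_
  rw [Finset.card_powersetCard, Finset.card_univ, Fintype.card_fin]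

lemma choose_mono_step {n r s : ℕ} (hrs : r ≤ s) (hs : s ≤ n / 2) :
    n.choose r ≤ n.choose s := by
  induction s with
  | zero => simp_all
  | succ s' ih =>
    rcases Nat.lt_or_ge r (s' + 1) with h | h
    · have h1 : n.choose r ≤ n.choose s' := ih (Nat.lt_succ_iff.mp h) (le_trans (Nat.le_succ _) hs)
      exact le_trans h1 (Nat.choose_le_succ_of_lt_half_left (lt_of_lt_of_le (Nat.lt_succ_self s') hs))
    · have : r = s' + 1 := le_antisymm hrs h
      subst this
      exact le_rfl

/-- `K^K ≤ 3^K * K!` (real version). -/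
lemma pow_le_three_pow_mul_factorial (K : ℕ) :
    (K : ℝ) ^ K ≤ 3 ^ K * (Nat.factorial K : ℝ) := by
  induction K with
  | zero => simp
  | succ K ih =>
    have key : ((K : ℝ) + 1) ^ K ≤ 3 * (K : ℝ) ^ K := by
      rcases Nat.eq_zero_or_pos K with h0 | hpos
      · subst h0; norm_num
      · have hKpos : (0 : ℝ) < K := by exact_mod_cast hpos
        have h1 : (1 : ℝ) + 1 / K ≤ Real.exp (1 / K) := by
          have := Real.add_one_le_exp (1 / (K:ℝ))
          linarith
        have h2 : ((1 : ℝ) + 1 / K) ^ K ≤ Real.exp (1 / K) ^ K := by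
          apply pow_le_pow_left₀ (by positivity) h1
        have h3 : Real.exp (1 / K) ^ K = Real.exp 1 := by
          rw [← Real.exp_nat_mul]
          congr 1
          field_simp
        have h4 : Real.exp 1 ≤ 3 := by
          have := Real.exp_one_lt_d9
          linarith
        have h5 : ((K : ℝ) + 1) ^ K = (K : ℝ) ^ K * ((1 : ℝ) + 1 / K) ^ K := by
          rw [← mul_pow]
          congr 1
          field_simp
        rw [h5]
        calc (K : ℝ) ^ K * ((1 : ℝ) + 1 / K) ^ K
            ≤ (K : ℝ) ^ K * 3 := by
              apply mul_le_mul_of_nonneg_left _ (by positivity)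
              calc ((1 : ℝ) + 1 / K) ^ K ≤ Real.exp (1 / K) ^ K := h2
                _ = Real.exp 1 := h3
                _ ≤ 3 := h4
          _ = 3 * (K : ℝ) ^ K := by ring
    have hfac : (Nat.factorial (K + 1) : ℝ) = ((K : ℝ) + 1) * (Nat.factorial K : ℝ) := by
      rw [Nat.factorial_succ]
      push_cast
      ring
    have hKnn : (0:ℝ) ≤ (K:ℝ) + 1 := by positivity
    calc ((K + 1 : ℕ) : ℝ) ^ (K + 1) = ((K : ℝ) + 1) * ((K : ℝ) + 1) ^ K := by
          push_cast; ring
      _ ≤ ((K : ℝ) + 1) * (3 * (K : ℝ) ^ K) := by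
          apply mul_le_mul_of_nonneg_left key hKnn
      _ ≤ ((K : ℝ) + 1) * (3 * (3 ^ K * (Nat.factorial K : ℝ))) := by
          apply mul_le_mul_of_nonneg_left _ hKnn
          apply mul_le_mul_of_nonneg_left ih (by norm_num)
      _ = 3 ^ (K + 1) * (Nat.factorial (K + 1) : ℝ) := by
          rw [hfac]
          ring

lemma choose_16K_le (K : ℕ) (hK : 1 ≤ K) : (16 * K).choose K ≤ 48 ^ K := by
  have n1 : (16 * K).choose K * Nat.factorial K ≤ (16 * K) ^ K := by
    have h1 : (16 * K).descFactorial K = Nat.factorial K * (16 * K).choose K :=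
      Nat.descFactorial_eq_factorial_mul_choose _ _
    have h2 : (16 * K).descFactorial K ≤ (16 * K) ^ K := Nat.descFactorial_le_pow _ _
    rw [h1, mul_comm] at h2
    exact h2
  have n2 : K ^ K ≤ 3 ^ K * Nat.factorial K := by
    have := pow_le_three_pow_mul_factorial K
    exact_mod_cast this
  have key : (16 * K).choose K * K ^ K ≤ 48 ^ K * K ^ K := by
    calc (16 * K).choose K * K ^ K
        ≤ (16 * K).choose K * (3 ^ K * Nat.factorial K) :=
          Nat.mul_le_mul_left _ n2
      _ = 3 ^ K * ((16 * K).choose K * Nat.factorial K) := by ring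
      _ ≤ 3 ^ K * (16 * K) ^ K := Nat.mul_le_mul_left _ n1
      _ = 48 ^ K * K ^ K := by
          rw [mul_pow 16 K K, ← mul_assoc, ← Nat.mul_pow 3 16 K]
  have hKK : 0 < K ^ K := Nat.pow_pos (by omega)
  exact Nat.le_of_mul_le_mul_right key hKK

lemma ball_bound (K : ℕ) (hK : 1 ≤ K) :
    2 * (∑ j ∈ range K, (16 * K).choose j) ≤ 2 ^ (8 * K) := by
  have h1 : ∀ j ∈ range K, (16 * K).choose j ≤ (16 * K).choose K := by
    intro j hj
    apply choose_mono_step (le_of_lt (mem_range.mp hj))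
    omega
  have h2 : ∑ j ∈ range K, (16 * K).choose j ≤ K * (16 * K).choose K := by
    calc ∑ j ∈ range K, (16 * K).choose j ≤ ∑ _j ∈ range K, (16 * K).choose K :=
          Finset.sum_le_sum h1
      _ = K * (16 * K).choose K := by rw [Finset.sum_const, Finset.card_range, smul_eq_mul]
  have h3 : ∀ K : ℕ, 1 ≤ K → 2 * (K * 48 ^ K) ≤ 256 ^ K := by
    intro K
    induction K with
    | zero => omega
    | succ K' ih =>
      intro _
      rcases Nat.eq_zero_or_pos K' with h0 | hpos
      · subst h0; norm_num
      · have hih := ih hpos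
        calc 2 * ((K' + 1) * 48 ^ (K' + 1))
            ≤ 2 * ((2 * K') * 48 ^ (K' + 1)) := by
              have : K' + 1 ≤ 2 * K' := by omega
              exact Nat.mul_le_mul_left _ (Nat.mul_le_mul_right _ this)
          _ = (2 * (K' * 48 ^ K')) * 96 := by ring
          _ ≤ 256 ^ K' * 96 := Nat.mul_le_mul_right _ hih
          _ ≤ 256 ^ K' * 256 := Nat.mul_le_mul_left _ (by norm_num)
          _ = 256 ^ (K' + 1) := by ring
  have h4 : (256 : ℕ) ^ K = 2 ^ (8 * K) := by
    rw [show (256 : ℕ) = 2 ^ 8 from by norm_num, ← pow_mul]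
  calc 2 * (∑ j ∈ range K, (16 * K).choose j)
      ≤ 2 * (K * (16 * K).choose K) := Nat.mul_le_mul_left _ h2
    _ ≤ 2 * (K * 48 ^ K) := by
        apply Nat.mul_le_mul_left
        exact Nat.mul_le_mul_left _ (choose_16K_le K hK)
    _ ≤ 256 ^ K := h3 K hK
    _ = 2 ^ (8 * K) := h4

/-! ### Existence of a good parity-check family (Gilbert–Varshamov) -/

lemma dot_zero_count {a : Cube k} (ha : a ≠ 0) :
    2 * (univ.filter fun w : Cube k => dot w a = 0).card = 2 ^ k := by
  classical
  obtain ⟨i, hi⟩ := Function.ne_iff.mp ha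
  have hai : a i = 1 := zmod2_ne_zero hi
  have hshift : ∀ w : Cube k, dot (w + Pi.single i 1) a = dot w a + 1 := by
    intro w
    rw [dot_add_left, dot_single_left, hai]
  have hcard : (univ.filter fun w : Cube k => dot w a = 0).card
      = (univ.filter fun w : Cube k => ¬ dot w a = 0).card := by
    apply Finset.card_bij' (fun w _ => w + Pi.single i 1) (fun w _ => w + Pi.single i 1)
    · intro w _
      rw [add_assoc, cube_add_self, add_zero]
    · intro w _
      rw [add_assoc, cube_add_self, add_zero]
    · intro w hw
      simp only [mem_filter, mem_univ, true_and] at hw ⊢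
      rw [hshift, hw]
      decide
    · intro w hw
      simp only [mem_filter, mem_univ, true_and] at hw ⊢
      rw [hshift]
      rcases zmod2_cases (dot w a) with h | h
      · exact absurd h hw
      · rw [h]; decide
  have htot := Finset.card_filter_add_card_filter_not
    (s := (univ : Finset (Cube k))) (p := fun w => dot w a = 0)
  rw [Finset.card_univ, card_cube] at htot
  omega

lemma gv_exists (K : ℕ) (hK : 1 ≤ K) :
    ∃ H : Fin (8 * K) → Cube (16 * K),
      ∀ a : Cube (16 * K), a ≠ 0 → (∀ j, dot (H j) a = 0) → K ≤ wt a := by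
  classical
  set k := 16 * K with hk
  set t := 8 * K with ht
  set A : Finset (Cube k) := univ.filter (fun a => a ≠ 0 ∧ wt a < K) with hA
  set Bad : Finset (Fin t → Cube k) :=
    univ.filter (fun H => ∃ a : Cube k, a ≠ 0 ∧ wt a < K ∧ ∀ j, dot (H j) a = 0) with hBad
  -- each bad event has cardinality (number of w with dot w a = 0)^t
  have hcardBa : ∀ a : Cube k,
      (univ.filter fun H : Fin t → Cube k => ∀ j, dot (H j) a = 0).card
        = ((univ.filter fun w : Cube k => dot w a = 0).card) ^ t := by
    intro a
    rw [← Fintype.card_subtype, ← Fintype.card_subtype]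
    rw [Fintype.card_congr (Equiv.subtypePiEquivPi (p := fun _ (w : Cube k) => dot w a = 0))]
    rw [Fintype.card_pi]
    simp
  have hsubset : Bad ⊆ A.biUnion
      (fun a => univ.filter fun H : Fin t → Cube k => ∀ j, dot (H j) a = 0) := by
    intro H hH
    rw [hBad, mem_filter] at hH
    obtain ⟨-, a, ha0, haw, haj⟩ := hH
    rw [mem_biUnion]
    exact ⟨a, by rw [hA, mem_filter]; exact ⟨mem_univ _, ha0, haw⟩,
      by rw [mem_filter]; exact ⟨mem_univ _, haj⟩⟩
  have hAcard : A.card < 2 ^ t := by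
    have h1 : A ⊆ univ.filter fun w : Cube k => wt w < K := by
      intro a ha
      rw [hA, mem_filter] at ha
      rw [mem_filter]
      exact ⟨mem_univ _, ha.2.2⟩
    have h2 := Finset.card_le_card h1
    have h3 := card_ball_le (k := k) K
    have h4 := ball_bound K hK
    rw [← hk] at h4
    have h5 : 0 < 2 ^ (8 * K) := Nat.pow_pos (by omega)
    rw [ht]
    omega
  have hBadcard : Bad.card < 2 ^ (k * t) := by
    have h1 : Bad.card ≤ ∑ a ∈ A,
        (univ.filter fun H : Fin t → Cube k => ∀ j, dot (H j) a = 0).card :=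
      le_trans (Finset.card_le_card hsubset) (Finset.card_biUnion_le)
    have h2 : ∀ a ∈ A, 2 ^ t *
        (univ.filter fun H : Fin t → Cube k => ∀ j, dot (H j) a = 0).card
          = 2 ^ (k * t) := by
      intro a ha
      rw [hA, mem_filter] at ha
      rw [hcardBa a, ← Nat.mul_pow, dot_zero_count ha.2.1, ← pow_mul]
    have h3 : 2 ^ t * Bad.card ≤ A.card * 2 ^ (k * t) := by
      calc 2 ^ t * Bad.card
          ≤ 2 ^ t * ∑ a ∈ A, (univ.filter
              fun H : Fin t → Cube k => ∀ j, dot (H j) a = 0).card :=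
            Nat.mul_le_mul_left _ h1
        _ = ∑ a ∈ A, 2 ^ t * (univ.filter
              fun H : Fin t → Cube k => ∀ j, dot (H j) a = 0).card := by
            rw [Finset.mul_sum]
        _ = ∑ a ∈ A, 2 ^ (k * t) := by
            exact Finset.sum_congr rfl fun a ha => h2 a ha
        _ = A.card * 2 ^ (k * t) := by rw [Finset.sum_const, smul_eq_mul]
    have h4 : A.card * 2 ^ (k * t) < 2 ^ t * 2 ^ (k * t) := by
      have hp : 0 < 2 ^ (k * t) := by positivity
      exact (Nat.mul_lt_mul_right hp).mpr hAcard
    have h5 := lt_of_le_of_lt h3 h4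
    exact Nat.lt_of_mul_lt_mul_left h5
  have hne : ∃ H : Fin t → Cube k, H ∉ Bad := by
    by_contra hcon
    push_neg at hcon
    have : (univ : Finset (Fin t → Cube k)) ⊆ Bad := fun H _ => hcon H
    have hcard := Finset.card_le_card this
    rw [Finset.card_univ] at hcard
    have : Fintype.card (Fin t → Cube k) = 2 ^ (k * t) := by
      rw [Fintype.card_fun, card_cube, Fintype.card_fin, ← pow_mul]
    omega
  obtain ⟨H, hH⟩ := hne
  refine ⟨H, fun a ha0 haj => ?_⟩
  by_contra hlt
  apply hH
  rw [hBad, mem_filter]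
  exact ⟨mem_univ _, a, ha0, by omega, haj⟩

/-! ### The quotient metric space -/

variable (C : AddSubgroup (Cube k))

/-- the fiber of `z` in the cube -/
def fib (z : Cube k ⧸ C) : Finset (Cube k) :=
  univ.filter fun w => (QuotientAddGroup.mk w : Cube k ⧸ C) = z

lemma fib_nonempty (z : Cube k ⧸ C) : (fib C z).Nonempty := by
  obtain ⟨w, rfl⟩ := QuotientAddGroup.mk_surjective z
  exact ⟨w, by simp [fib]⟩

/-- minimum weight over a coset -/
def mu (z : Cube k ⧸ C) : ℕ :=
  ((fib C z).image wt).min' ((fib_nonempty C z).image wt)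

lemma mu_le {w : Cube k} {z : Cube k ⧸ C}
    (h : (QuotientAddGroup.mk w : Cube k ⧸ C) = z) : mu C z ≤ wt w := by
  apply Finset.min'_le
  exact Finset.mem_image_of_mem wt (by simp [fib, h])

lemma mu_spec (z : Cube k ⧸ C) :
    ∃ w : Cube k, (QuotientAddGroup.mk w : Cube k ⧸ C) = z ∧ wt w = mu C z := by
  have := Finset.min'_mem ((fib C z).image wt) ((fib_nonempty C z).image wt)
  rw [Finset.mem_image] at this
  obtain ⟨w, hw, hww⟩ := this
  rw [fib, mem_filter] at hw
  exact ⟨w, hw.2, hww⟩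

lemma mu_zero : mu C (0 : Cube k ⧸ C) = 0 :=
  Nat.le_antisymm (by simpa [wt_zero] using mu_le C (QuotientAddGroup.mk_zero C : ((0 : Cube k) : Cube k ⧸ C) = 0))
    (Nat.zero_le _)

lemma mu_eq_zero {z : Cube k ⧸ C} (h : mu C z = 0) : z = 0 := by
  obtain ⟨w, hwz, hww⟩ := mu_spec C z
  rw [h] at hww
  rw [← hwz, wt_eq_zero hww, QuotientAddGroup.mk_zero]

lemma mu_add_le (y z : Cube k ⧸ C) : mu C (y + z) ≤ mu C y + mu C z := by
  obtain ⟨w1, hw1, hww1⟩ := mu_spec C y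
  obtain ⟨w2, hw2, hww2⟩ := mu_spec C z
  have hmk : (QuotientAddGroup.mk (w1 + w2) : Cube k ⧸ C) = y + z := by
    rw [QuotientAddGroup.mk_add, hw1, hw2]
  calc mu C (y + z) ≤ wt (w1 + w2) := mu_le C hmk
    _ ≤ wt w1 + wt w2 := wt_add_le w1 w2
    _ = mu C y + mu C z := by rw [hww1, hww2]

lemma quot_add_self (v : Cube k ⧸ C) : v + v = 0 := by
  obtain ⟨w, rfl⟩ := QuotientAddGroup.mk_surjective v
  rw [← QuotientAddGroup.mk_add, cube_add_self, QuotientAddGroup.mk_zero]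

lemma quot_sub_comm (x y : Cube k ⧸ C) : x - y = y - x := by
  have h1 : (x - y) + (y - x) = 0 := by abel
  have h2 : (x - y) + (x - y) = 0 := quot_add_self C _
  calc x - y = (x - y) + ((x - y) + (y - x)) := by rw [h1, add_zero]
    _ = ((x - y) + (x - y)) + (y - x) := by rw [add_assoc]
    _ = y - x := by rw [h2, zero_add]

/-- The metric space structure on the quotient: distance = min weight of coset of difference. -/
def quotMet : MetricSpace (Cube k ⧸ C) where
  dist x y := mu C (x - y)
  dist_self x := by simp [sub_self, mu_zero]
  dist_comm x y := by simp [quot_sub_comm C x y]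
  dist_triangle x y z := by
    have h := mu_add_le C (x - y) (y - z)
    rw [sub_add_sub_cancel] at h
    show (mu C (x - z) : ℝ) ≤ (mu C (x - y) : ℝ) + (mu C (y - z) : ℝ)
    exact_mod_cast h
  eq_of_dist_eq_zero := by
    intro x y h
    have h' : (mu C (x - y) : ℝ) = 0 := h
    have : mu C (x - y) = 0 := by exact_mod_cast h'
    have := mu_eq_zero C this
    exact sub_eq_zero.mp this

lemma quotMet_dist_eq (x y : Cube k ⧸ C) :
    @dist _ (quotMet C).toDist x y = (mu C (x - y) : ℝ) := rfl

/-! ### Assembly -/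

def rowHom {k t : ℕ} (H : Fin t → Cube k) : (Fin t → ZMod 2) →+ Cube k where
  toFun c := ∑ j, c j • H j
  map_zero' := by simp
  map_add' c d := by
    simp only [Pi.add_apply, add_smul]
    exact Finset.sum_add_distrib

lemma rowHom_mem {k t : ℕ} (H : Fin t → Cube k) (j : Fin t) : H j ∈ (rowHom H).range := by
  refine ⟨(Pi.single j 1 : Fin t → ZMod 2), ?_⟩
  show ∑ j', (Pi.single j 1 : Fin t → ZMod 2) j' • H j' = H j
  rw [Finset.sum_eq_single j]
  · rw [Pi.single_eq_same, one_smul]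
  · intro b _ hb
    rw [Pi.single_eq_of_ne hb, zero_smul]
  · intro h; exact absurd (mem_univ j) h

lemma card_rowHom_range_le {k t : ℕ} (H : Fin t → Cube k) :
    Nat.card (rowHom H).range ≤ 2 ^ t := by
  have hs : Function.Surjective (rowHom H).rangeRestrict :=
    AddMonoidHom.rangeRestrict_surjective _
  calc Nat.card (rowHom H).range ≤ Nat.card (Fin t → ZMod 2) :=
        Nat.card_le_card_of_surjective _ hs
    _ = 2 ^ t := by
        rw [Nat.card_eq_fintype_card, Fintype.card_fun]
        simp

lemma euclid_sq {q : ℕ} (u v : EuclideanSpace ℝ (Fin q)) :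
    dist u v ^ 2 = ∑ l, (u l - v l) ^ 2 := by
  rw [EuclideanSpace.dist_eq, Real.sq_sqrt (by positivity)]
  exact Finset.sum_congr rfl fun l _ => by rw [Real.dist_eq, sq_abs]

/-- Main construction: a finite metric space of size between `2^(8K)` and `2^(16K)`
into which every Euclidean embedding has distortion at least `K / 4`. -/
lemma main (K : ℕ) (hK : 1 ≤ K) :
    ∃ (X : Type) (_ : MetricSpace X) (_ : Fintype X),
      2 ^ (8 * K) ≤ Fintype.card X ∧ Fintype.card X ≤ 2 ^ (16 * K) ∧
      ∀ (q : ℕ) (f : X → EuclideanSpace ℝ (Fin q)) (r α : ℝ),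
        0 < r → 1 ≤ α →
        (∀ x y : X,
          r * dist x y ≤ dist (f x) (f y) ∧
          dist (f x) (f y) ≤ α * r * dist x y) →
        (K : ℝ) ≤ 4 * α := by
  classical
  obtain ⟨H, hgv⟩ := gv_exists K hK
  set C : AddSubgroup (Cube (16 * K)) := (rowHom H).range with hC
  have hmin : ∀ a : Cube (16 * K), a ≠ 0 → (∀ c ∈ C, dot a c = 0) → K ≤ wt a := by
    intro a ha hc
    refine hgv a ha fun j => ?_
    rw [dot_comm]
    exact hc (H j) (rowHom_mem H j)
  letI instM : MetricSpace (Cube (16 * K) ⧸ C) := quotMet C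
  letI instF : Fintype (Cube (16 * K) ⧸ C) := Fintype.ofFinite _
  refine ⟨Cube (16 * K) ⧸ C, instM, instF, ?_, ?_, ?_⟩
  · have h1 := AddSubgroup.card_eq_card_quotient_mul_card_addSubgroup C
    have h2 : Nat.card (Cube (16 * K)) = 2 ^ (16 * K) := by
      rw [Nat.card_eq_fintype_card, card_cube]
    have h3 : Nat.card C ≤ 2 ^ (8 * K) := card_rowHom_range_le H
    have h4 : 2 ^ (8 * K) * 2 ^ (8 * K) ≤ Nat.card (Cube (16 * K) ⧸ C) * 2 ^ (8 * K) := by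
      calc 2 ^ (8 * K) * 2 ^ (8 * K) = 2 ^ (16 * K) := by
            rw [← pow_add]; congr 1; omega
        _ = Nat.card (Cube (16 * K) ⧸ C) * Nat.card C := by rw [← h2, h1]
        _ ≤ Nat.card (Cube (16 * K) ⧸ C) * 2 ^ (8 * K) := Nat.mul_le_mul_left _ h3
    have h5 : 2 ^ (8 * K) ≤ Nat.card (Cube (16 * K) ⧸ C) :=
      Nat.le_of_mul_le_mul_right h4 (by positivity)
    rwa [Nat.card_eq_fintype_card] at h5
  · have h1 := AddSubgroup.card_eq_card_quotient_mul_card_addSubgroup C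
    have h2 : Nat.card (Cube (16 * K)) = 2 ^ (16 * K) := by
      rw [Nat.card_eq_fintype_card, card_cube]
    have h3 : 1 ≤ Nat.card C := Nat.one_le_iff_ne_zero.mpr (Nat.card_ne_zero.mpr
      ⟨⟨0, zero_mem C⟩, inferInstance⟩)
    have h4 : Nat.card (Cube (16 * K) ⧸ C) ≤ 2 ^ (16 * K) := by
      calc Nat.card (Cube (16 * K) ⧸ C)
          ≤ Nat.card (Cube (16 * K) ⧸ C) * Nat.card C := Nat.le_mul_of_pos_right _ h3
        _ = 2 ^ (16 * K) := by rw [← h1, h2]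
    rwa [Nat.card_eq_fintype_card] at h4
  · intro q f r α hr hα hsand
    -- the count of "close" elements is at most half
    have hbad : 2 * (univ.filter fun z : Cube (16 * K) =>
        mu C (QuotientAddGroup.mk z) < K).card ≤ 2 ^ (16 * K) := by
      set Wb : Finset (Cube (16 * K)) := univ.filter fun w => wt w < K with hWb
      set CF : Finset (Cube (16 * K)) := univ.filter fun w => w ∈ C with hCF
      have hinj : ∀ z ∈ univ.filter fun z : Cube (16 * K) => mu C (QuotientAddGroup.mk z) < K,
          ((Classical.choose (mu_spec C (QuotientAddGroup.mk z)),
            z - Classical.choose (mu_spec C (QuotientAddGroup.mk z))) :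
              Cube (16 * K) × Cube (16 * K)) ∈ Wb ×ˢ CF := by
        intro z hz
        rw [mem_filter] at hz
        obtain ⟨hmk, hwt⟩ := Classical.choose_spec (mu_spec C (QuotientAddGroup.mk z))
        rw [Finset.mem_product]
        constructor
        · rw [hWb, mem_filter]
          exact ⟨mem_univ _, by rw [hwt]; exact hz.2⟩
        · rw [hCF, mem_filter]
          refine ⟨mem_univ _, ?_⟩
          have h0 := (QuotientAddGroup.eq (s := C)).mp hmk
          rw [sub_eq_neg_add]
          exact h0
      have hinj2 : ∀ z₁ ∈ univ.filter fun z : Cube (16 * K) =>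
            mu C (QuotientAddGroup.mk z) < K,
          ∀ z₂ ∈ univ.filter fun z : Cube (16 * K) => mu C (QuotientAddGroup.mk z) < K,
          ((Classical.choose (mu_spec C (QuotientAddGroup.mk z₁)),
            z₁ - Classical.choose (mu_spec C (QuotientAddGroup.mk z₁))) :
              Cube (16 * K) × Cube (16 * K))
          = (Classical.choose (mu_spec C (QuotientAddGroup.mk z₂)),
            z₂ - Classical.choose (mu_spec C (QuotientAddGroup.mk z₂))) → z₁ = z₂ := by
        intro z₁ _ z₂ _ heq
        have h1 := congrArg Prod.fst heq
        have h2 := congrArg Prod.snd heq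
        simp only at h1 h2
        rw [h1] at h2
        exact sub_left_injective h2
      have hcard := Finset.card_le_card_of_injOn _ hinj hinj2
      rw [Finset.card_product] at hcard
      have hWbcard : 2 * Wb.card ≤ 2 ^ (8 * K) := by
        have h1 := card_ball_le (k := 16 * K) K
        have h2 := ball_bound K hK
        rw [hWb]
        omega
      have hCFcard : CF.card ≤ 2 ^ (8 * K) := by
        have hrec : ∀ w ∈ CF,
            rowHom H (if h : ∃ c, rowHom H c = w then Classical.choose h else 0) = w := by
          intro w hw
          rw [hCF, mem_filter] at hw
          have hw2 : ∃ c, rowHom H c = w := by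
            have hmem := hw.2
            rw [hC, AddMonoidHom.mem_range] at hmem
            exact hmem
          rw [dif_pos hw2]
          exact Classical.choose_spec hw2
        have hinjp : ∀ w₁ ∈ CF, ∀ w₂ ∈ CF,
            (if h : ∃ c, rowHom H c = w₁ then Classical.choose h else 0)
              = (if h : ∃ c, rowHom H c = w₂ then Classical.choose h else 0) → w₁ = w₂ := by
          intro w₁ h1 w₂ h2 he
          rw [← hrec w₁ h1, ← hrec w₂ h2, he]
        have hcc := Finset.card_le_card_of_injOn _ (fun w _ =>
          mem_univ (if h : ∃ c, rowHom H c = w then Classical.choose h else 0)) hinjp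
        calc CF.card ≤ (univ : Finset (Fin (8 * K) → ZMod 2)).card := hcc
          _ = 2 ^ (8 * K) := by
              rw [Finset.card_univ, Fintype.card_fun]
              simp
      calc 2 * (univ.filter fun z : Cube (16 * K) => mu C (QuotientAddGroup.mk z) < K).card
          ≤ 2 * (Wb.card * CF.card) := Nat.mul_le_mul_left _ hcard
        _ = (2 * Wb.card) * CF.card := by ring
        _ ≤ 2 ^ (8 * K) * 2 ^ (8 * K) := Nat.mul_le_mul hWbcard hCFcard
        _ = 2 ^ (16 * K) := by rw [← pow_add]; congr 1; omega
    -- per-coordinate functions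
    set g : Fin q → Cube (16 * K) → ℝ := fun l w => f (QuotientAddGroup.mk w) l with hg
    have hinv : ∀ l : Fin q, ∀ x : Cube (16 * K), ∀ c ∈ C, g l (x + c) = g l x := by
      intro l x c hc
      have hmk : (QuotientAddGroup.mk (x + c) : Cube (16 * K) ⧸ C) = QuotientAddGroup.mk x := by
        rw [QuotientAddGroup.mk_add]
        have h0 : (QuotientAddGroup.mk c : Cube (16 * K) ⧸ C) = 0 :=
          (QuotientAddGroup.eq_zero_iff c).mpr hc
        rw [h0, add_zero]
      show f (QuotientAddGroup.mk (x + c)) l = f (QuotientAddGroup.mk x) l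
      rw [hmk]
    have hpoin : ∀ l : Fin q,
        2 * (K : ℝ) * (∑ x, ∑ y, (g l x - g l y) ^ 2)
          ≤ (2 ^ (16 * K) : ℝ) * ∑ i, ∑ x, (g l (x + Pi.single i 1) - g l x) ^ 2 :=
      fun l => poincare C K hmin (g l) (hinv l)
    have hdistsq : ∀ x y : Cube (16 * K),
        dist (f (QuotientAddGroup.mk x)) (f (QuotientAddGroup.mk y)) ^ 2
          = ∑ l, (g l x - g l y) ^ 2 := by
      intro x y
      rw [euclid_sq]
    set S1 : ℝ := ∑ x : Cube (16 * K), ∑ y : Cube (16 * K),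
      dist (f (QuotientAddGroup.mk x)) (f (QuotientAddGroup.mk y)) ^ 2 with hS1
    -- lower bound for S1
    have hlow : r ^ 2 * ((K : ℝ) ^ 2 * ((2:ℝ) ^ (16 * K) / 2)) * (2:ℝ) ^ (16 * K) ≤ S1 := by
      have hxfixed : ∀ x : Cube (16 * K),
          (K : ℝ) ^ 2 * ((2:ℝ) ^ (16 * K) / 2)
            ≤ ∑ y, (mu C (QuotientAddGroup.mk x - QuotientAddGroup.mk y) : ℝ) ^ 2 := by
        intro x
        have hbijcard : (univ.filter fun y : Cube (16 * K) =>
              mu C (QuotientAddGroup.mk x - QuotientAddGroup.mk y) < K).card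
            = (univ.filter fun z : Cube (16 * K) => mu C (QuotientAddGroup.mk z) < K).card := by
          refine Finset.card_bij' (fun y _ => x - y) (fun z _ => x - z) ?_ ?_ ?_ ?_
          · intro y hy
            simp only [mem_filter, mem_univ, true_and] at hy ⊢
            rw [← QuotientAddGroup.mk_sub] at hy
            exact hy
          · intro z hz
            simp only [mem_filter, mem_univ, true_and] at hz ⊢
            rw [← QuotientAddGroup.mk_sub, sub_sub_cancel]
            exact hz
          · intro y _
            simp only [sub_sub_cancel]
          · intro z _
            simp only [sub_sub_cancel]
        set Good : Finset (Cube (16 * K)) := univ.filter fun y : Cube (16 * K) =>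
          K ≤ mu C (QuotientAddGroup.mk x - QuotientAddGroup.mk y) with hGood
        have hgoodcard : 2 ^ (16 * K) ≤ 2 * Good.card := by
          have hsplit := Finset.card_filter_add_card_filter_not
            (s := (univ : Finset (Cube (16 * K))))
            (p := fun y => K ≤ mu C (QuotientAddGroup.mk x - QuotientAddGroup.mk y))
          have hcompl : (univ.filter fun y : Cube (16 * K) =>
                ¬ K ≤ mu C (QuotientAddGroup.mk x - QuotientAddGroup.mk y)).card
              = (univ.filter fun y : Cube (16 * K) =>
                mu C (QuotientAddGroup.mk x - QuotientAddGroup.mk y) < K).card := by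
            congr 1
            apply Finset.filter_congr
            intro y _
            simp [Nat.not_le]
          rw [hcompl, hbijcard, Finset.card_univ, card_cube] at hsplit
          rw [← hGood] at hsplit
          omega
        have hterm : ∀ y ∈ Good, (K : ℝ) ^ 2
            ≤ (mu C (QuotientAddGroup.mk x - QuotientAddGroup.mk y) : ℝ) ^ 2 := by
          intro y hy
          rw [hGood, mem_filter] at hy
          have h0 : (K : ℝ) ≤ (mu C (QuotientAddGroup.mk x - QuotientAddGroup.mk y) : ℝ) := by
            exact_mod_cast hy.2
          nlinarith [Nat.cast_nonneg (α := ℝ) K]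
        calc (K : ℝ) ^ 2 * ((2:ℝ) ^ (16 * K) / 2)
            ≤ (K : ℝ) ^ 2 * Good.card := by
              apply mul_le_mul_of_nonneg_left _ (by positivity)
              have h0 : (2 : ℝ) ^ (16 * K) ≤ 2 * (Good.card : ℝ) := by exact_mod_cast hgoodcard
              linarith
          _ = ∑ _y ∈ Good, (K : ℝ) ^ 2 := by rw [Finset.sum_const, nsmul_eq_mul]; ring
          _ ≤ ∑ y ∈ Good, (mu C (QuotientAddGroup.mk x - QuotientAddGroup.mk y) : ℝ) ^ 2 :=
              Finset.sum_le_sum hterm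
          _ ≤ ∑ y, (mu C (QuotientAddGroup.mk x - QuotientAddGroup.mk y) : ℝ) ^ 2 := by
              apply Finset.sum_le_sum_of_subset_of_nonneg (Finset.subset_univ _)
              intro y _ _
              positivity
      have hpair : ∀ x y : Cube (16 * K),
          r ^ 2 * (mu C (QuotientAddGroup.mk x - QuotientAddGroup.mk y) : ℝ) ^ 2
            ≤ dist (f (QuotientAddGroup.mk x)) (f (QuotientAddGroup.mk y)) ^ 2 := by
        intro x y
        have h1 := (hsand (QuotientAddGroup.mk x) (QuotientAddGroup.mk y)).1
        have h2 : dist (QuotientAddGroup.mk x : Cube (16 * K) ⧸ C) (QuotientAddGroup.mk y)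
            = (mu C (QuotientAddGroup.mk x - QuotientAddGroup.mk y) : ℝ) := rfl
        rw [h2] at h1
        have h3 : 0 ≤ r * (mu C (QuotientAddGroup.mk x - QuotientAddGroup.mk y) : ℝ) := by
          positivity
        nlinarith [h1, h3]
      calc r ^ 2 * ((K : ℝ) ^ 2 * ((2:ℝ) ^ (16 * K) / 2)) * (2:ℝ) ^ (16 * K)
          = ∑ _x : Cube (16 * K), r ^ 2 * ((K : ℝ) ^ 2 * ((2:ℝ) ^ (16 * K) / 2)) := by
            rw [Finset.sum_const, nsmul_eq_mul, Finset.card_univ, card_cube]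
            push_cast
            ring
        _ ≤ ∑ x : Cube (16 * K), ∑ y : Cube (16 * K),
              dist (f (QuotientAddGroup.mk x)) (f (QuotientAddGroup.mk y)) ^ 2 := by
            apply Finset.sum_le_sum
            intro x _
            calc r ^ 2 * ((K : ℝ) ^ 2 * ((2:ℝ) ^ (16 * K) / 2))
                ≤ r ^ 2 * ∑ y, (mu C (QuotientAddGroup.mk x
                    - QuotientAddGroup.mk y) : ℝ) ^ 2 :=
                  mul_le_mul_of_nonneg_left (hxfixed x) (by positivity)
              _ = ∑ y, r ^ 2 * (mu C (QuotientAddGroup.mk x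
                    - QuotientAddGroup.mk y) : ℝ) ^ 2 := by
                  rw [Finset.mul_sum]
              _ ≤ ∑ y, dist (f (QuotientAddGroup.mk x)) (f (QuotientAddGroup.mk y)) ^ 2 :=
                  Finset.sum_le_sum fun y _ => hpair x y
        _ = S1 := hS1.symm
    -- upper bound for S1 via Poincaré
    have hupp : 2 * (K : ℝ) * S1
        ≤ (2 ^ (16 * K) : ℝ) * (((16 * K : ℕ) : ℝ) * 2 ^ (16 * K) * (α * r) ^ 2) := by
      have hS1eq : S1 = ∑ l, ∑ x : Cube (16 * K), ∑ y : Cube (16 * K), (g l x - g l y) ^ 2 := by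
        calc S1 = ∑ x : Cube (16 * K), ∑ y : Cube (16 * K), ∑ l, (g l x - g l y) ^ 2 := by
              rw [hS1]
              exact Finset.sum_congr rfl fun x _ =>
                Finset.sum_congr rfl fun y _ => hdistsq x y
          _ = ∑ x : Cube (16 * K), ∑ l, ∑ y : Cube (16 * K), (g l x - g l y) ^ 2 :=
              Finset.sum_congr rfl fun x _ => Finset.sum_comm
          _ = ∑ l, ∑ x : Cube (16 * K), ∑ y : Cube (16 * K), (g l x - g l y) ^ 2 :=
              Finset.sum_comm
      have hE : ∑ l, ∑ i, ∑ x : Cube (16 * K), (g l (x + Pi.single i 1) - g l x) ^ 2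
          ≤ ((16 * K : ℕ) : ℝ) * 2 ^ (16 * K) * (α * r) ^ 2 := by
        have hswap : ∑ l, ∑ i, ∑ x : Cube (16 * K), (g l (x + Pi.single i 1) - g l x) ^ 2
            = ∑ i, ∑ x : Cube (16 * K), ∑ l, (g l (x + Pi.single i 1) - g l x) ^ 2 := by
          calc ∑ l, ∑ i, ∑ x : Cube (16 * K), (g l (x + Pi.single i 1) - g l x) ^ 2
              = ∑ i, ∑ l, ∑ x : Cube (16 * K), (g l (x + Pi.single i 1) - g l x) ^ 2 :=
                Finset.sum_comm
            _ = ∑ i, ∑ x : Cube (16 * K), ∑ l, (g l (x + Pi.single i 1) - g l x) ^ 2 :=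
                Finset.sum_congr rfl fun i _ => Finset.sum_comm
        rw [hswap]
        have hstep : ∀ (i : Fin (16 * K)) (x : Cube (16 * K)),
            ∑ l, (g l (x + Pi.single i 1) - g l x) ^ 2 ≤ (α * r) ^ 2 := by
          intro i x
          have h1 : ∑ l, (g l (x + Pi.single i 1) - g l x) ^ 2
              = dist (f (QuotientAddGroup.mk (x + Pi.single i 1)))
                  (f (QuotientAddGroup.mk x)) ^ 2 := (hdistsq _ _).symm
          rw [h1]
          have h2 := (hsand (QuotientAddGroup.mk (x + Pi.single i 1))
            (QuotientAddGroup.mk x)).2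
          have h3 : dist (QuotientAddGroup.mk (x + Pi.single i 1) : Cube (16 * K) ⧸ C)
              (QuotientAddGroup.mk x)
              = (mu C (QuotientAddGroup.mk (x + Pi.single i 1)
                  - QuotientAddGroup.mk x) : ℝ) := rfl
          have h4 : (QuotientAddGroup.mk (x + Pi.single i 1) : Cube (16 * K) ⧸ C)
              - QuotientAddGroup.mk x = QuotientAddGroup.mk (Pi.single i 1) := by
            rw [← QuotientAddGroup.mk_sub]
            congr 1
            abel
          have h5 : mu C (QuotientAddGroup.mk (Pi.single i 1) : Cube (16 * K) ⧸ C) ≤ 1 :=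
            le_trans (mu_le C rfl) (wt_single i)
          have h6 : dist (QuotientAddGroup.mk (x + Pi.single i 1) : Cube (16 * K) ⧸ C)
              (QuotientAddGroup.mk x) ≤ 1 := by
            rw [h3, h4]
            exact_mod_cast h5
          have h7 : dist (f (QuotientAddGroup.mk (x + Pi.single i 1)))
              (f (QuotientAddGroup.mk x)) ≤ α * r := by
            have h9 : α * r * dist (QuotientAddGroup.mk (x + Pi.single i 1) : Cube (16 * K) ⧸ C)
                (QuotientAddGroup.mk x) ≤ α * r * 1 :=
              mul_le_mul_of_nonneg_left h6 (by positivity)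
            rw [mul_one] at h9
            exact le_trans h2 h9
          have h8 : (0:ℝ) ≤ dist (f (QuotientAddGroup.mk (x + Pi.single i 1)))
              (f (QuotientAddGroup.mk x)) := dist_nonneg
          nlinarith [h7, h8]
        calc ∑ i, ∑ x : Cube (16 * K), ∑ l, (g l (x + Pi.single i 1) - g l x) ^ 2
            ≤ ∑ i : Fin (16 * K), ∑ _x : Cube (16 * K), (α * r) ^ 2 :=
              Finset.sum_le_sum fun i _ => Finset.sum_le_sum fun x _ => hstep i x
          _ = ((16 * K : ℕ) : ℝ) * 2 ^ (16 * K) * (α * r) ^ 2 := by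
              simp only [Finset.sum_const, nsmul_eq_mul, Finset.card_univ, card_cube,
                Fintype.card_fin]
              push_cast
              ring
      calc 2 * (K : ℝ) * S1
          = ∑ l, 2 * (K : ℝ) * (∑ x, ∑ y, (g l x - g l y) ^ 2) := by
            rw [hS1eq, Finset.mul_sum]
        _ ≤ ∑ l, (2 ^ (16 * K) : ℝ) * ∑ i, ∑ x, (g l (x + Pi.single i 1) - g l x) ^ 2 :=
            Finset.sum_le_sum fun l _ => hpoin l
        _ = (2 ^ (16 * K) : ℝ) * ∑ l, ∑ i, ∑ x, (g l (x + Pi.single i 1) - g l x) ^ 2 := by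
            rw [Finset.mul_sum]
        _ ≤ (2 ^ (16 * K) : ℝ) * (((16 * K : ℕ) : ℝ) * 2 ^ (16 * K) * (α * r) ^ 2) :=
            mul_le_mul_of_nonneg_left hE (by positivity)
    -- combine
    have h2kpos : (0:ℝ) < 2 ^ (16 * K) := by positivity
    have hKpos : (0:ℝ) < K := by exact_mod_cast hK
    have hfinal : 2 * (K:ℝ) * (r ^ 2 * ((K : ℝ) ^ 2 * ((2:ℝ) ^ (16 * K) / 2)) * 2 ^ (16 * K))
        ≤ (2 ^ (16 * K) : ℝ) * (((16 * K : ℕ) : ℝ) * 2 ^ (16 * K) * (α * r) ^ 2) := by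
      calc 2 * (K:ℝ) * (r ^ 2 * ((K : ℝ) ^ 2 * ((2:ℝ) ^ (16 * K) / 2)) * 2 ^ (16 * K))
          ≤ 2 * (K:ℝ) * S1 := by
            apply mul_le_mul_of_nonneg_left hlow (by positivity)
        _ ≤ (2 ^ (16 * K) : ℝ) * (((16 * K : ℕ) : ℝ) * 2 ^ (16 * K) * (α * r) ^ 2) := hupp
    have hkK : ((16 * K : ℕ) : ℝ) = 16 * (K : ℝ) := by push_cast; ring
    rw [hkK] at hfinal
    have hsimp : (K:ℝ) ^ 3 ≤ 16 * (K:ℝ) * α ^ 2 := by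
      have hr2 : (0:ℝ) < r ^ 2 := by positivity
      have hq : (0:ℝ) < (2:ℝ) ^ (16 * K) * (2:ℝ) ^ (16 * K) * r ^ 2 := by positivity
      nlinarith [hfinal, hq, mul_pos h2kpos h2kpos]
    have hK2 : (K:ℝ) ^ 2 ≤ 16 * α ^ 2 := by
      have hmul := mul_le_mul_of_nonneg_right hsimp
        (le_of_lt (by positivity : (0:ℝ) < 1 / (K:ℝ)))
      calc (K:ℝ) ^ 2 = (K:ℝ) ^ 3 * (1 / (K:ℝ)) := by field_simp
        _ ≤ 16 * (K:ℝ) * α ^ 2 * (1 / (K:ℝ)) := hmul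
        _ = 16 * α ^ 2 := by field_simp
    have hαpos : (0:ℝ) < α := lt_of_lt_of_le one_pos hα
    nlinarith [hK2, hKpos, hαpos]

end LLR

end

/-- **Optimality of Bourgain's bound** (Linial–London–Rabinovich).
There is a constant `c > 0` and arbitrarily large `n`-point metric spaces
such that every embedding into a Euclidean space `ℝ^q` (for any `q`) has
distortion at least `c · log n`. -/
theorem bourgain_optimal :
    ∃ c > (0 : ℝ), ∀ N : ℕ, ∃ n : ℕ, N ≤ n ∧
      ∃ (X : Type) (_ : MetricSpace X) (_ : Fintype X),
        Fintype.card X = n ∧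
        ∀ (q : ℕ) (f : X → EuclideanSpace ℝ (Fin q)) (r α : ℝ),
          0 < r → 1 ≤ α →
          (∀ x y : X,
            r * dist x y ≤ dist (f x) (f y) ∧
            dist (f x) (f y) ≤ α * r * dist x y) →
          c * Real.log n ≤ α := by
  refine ⟨1 / 48, by norm_num, fun N => ?_⟩
  obtain ⟨X, mX, fX, hlo, hhi, hdist⟩ := LLR.main (max N 1) (le_max_right N 1)
  refine ⟨Fintype.card X, ?_, X, mX, fX, rfl, ?_⟩
  · have h1 : N ≤ max N 1 := le_max_left N 1
    have h2 : max N 1 < 2 ^ (max N 1) := (max N 1).lt_two_pow_self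
    have h3 : (2:ℕ) ^ (max N 1) ≤ 2 ^ (8 * max N 1) :=
      Nat.pow_le_pow_right (by norm_num) (by omega)
    omega
  · intro q f r α hr hα hsand
    have hα4 : ((max N 1 : ℕ) : ℝ) ≤ 4 * α := hdist q f r α hr hα hsand
    have hn1 : (1:ℕ) ≤ Fintype.card X := by
      have h2 : (1:ℕ) ≤ 2 ^ (8 * max N 1) := Nat.one_le_two_pow
      omega
    have hpos : (0:ℝ) < (Fintype.card X : ℝ) := by exact_mod_cast hn1
    have hlog : Real.log (Fintype.card X) ≤ ((16 * max N 1 : ℕ) : ℝ) * Real.log 2 := by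
      have hcardle : ((Fintype.card X : ℕ) : ℝ) ≤ (2:ℝ) ^ (16 * max N 1) := by
        exact_mod_cast hhi
      calc Real.log (Fintype.card X) ≤ Real.log ((2:ℝ) ^ (16 * max N 1)) :=
            Real.log_le_log hpos hcardle
        _ = ((16 * max N 1 : ℕ) : ℝ) * Real.log 2 := by rw [Real.log_pow]
    have hlog2 : Real.log 2 ≤ 3 / 4 := by
      have := Real.log_two_lt_d9
      linarith
    have h16 : ((16 * max N 1 : ℕ) : ℝ) = 16 * ((max N 1 : ℕ) : ℝ) := by push_cast; ring
    have hlogK : Real.log (Fintype.card X) ≤ 12 * ((max N 1 : ℕ) : ℝ) := by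
      have hnn : (0:ℝ) ≤ ((16 * max N 1 : ℕ) : ℝ) := Nat.cast_nonneg _
      have := mul_le_mul_of_nonneg_left hlog2 hnn
      rw [h16] at this hlog
      nlinarith [Nat.cast_nonneg (α := ℝ) (max N 1)]
    linarith [hα4, hlogK]
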